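/- arXiv:0902.1594 — 5 statements merged into one kernel-verified Lean document; each statement's English description precedes it below -/
import Mathlib

section
/- Let d_0, d_1, ..., d_{s+1} be s+2 real numbers and define r_i = ∏_{0 ≤ j < k ≤ s+1, j,k ≠ i} (d_k - d_j). Then for any polynomial p of degree at most s, ∑_{i=0}^{s+1} (-1)^i r_i p(d_i) = 0. -/
open Finset

lemma prod_pairs {n : ℕ} (f : Fin n → Fin n → ℝ) :
    (∏ a : Fin n, ∏ b ∈ Ioi a, f a b) =
      ∏ q ∈ Finset.univ.filter (fun q : Fin n × Fin n => q.1 < q.2), f q.1 q.2 := by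
  have h1 : ∀ a : Fin n, Ioi a = Finset.univ.filter (fun b => a < b) := by
    intro a; ext b; simp
  simp_rw [h1, Finset.prod_filter]
  rw [← Finset.univ_product_univ, Finset.prod_product]

lemma reindex {n : ℕ} (d : Fin (n + 1) → ℝ) (i : Fin (n + 1)) :
    (∏ a : Fin n, ∏ b ∈ Ioi a, (d (i.succAbove b) - d (i.succAbove a))) =
      ∏ q ∈ Finset.univ.filter
          (fun q : Fin (n + 1) × Fin (n + 1) => q.1 < q.2 ∧ q.1 ≠ i ∧ q.2 ≠ i),
        (d q.2 - d q.1) := by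
  rw [prod_pairs]
  refine Finset.prod_bij (fun q _ => (i.succAbove q.1, i.succAbove q.2)) ?_ ?_ ?_ ?_
  · intro q hq
    simp only [mem_filter, mem_univ, true_and] at hq ⊢
    exact ⟨Fin.succAbove_lt_succAbove_iff.2 hq, Fin.succAbove_ne i q.1,
      Fin.succAbove_ne i q.2⟩
  · intro a _ b _ h
    simp only [Prod.mk.injEq] at h
    exact Prod.ext (Fin.succAbove_right_injective h.1) (Fin.succAbove_right_injective h.2)
  · intro q hq
    simp only [mem_filter, mem_univ, true_and] at hq
    obtain ⟨a, ha⟩ := Fin.exists_succAbove_eq hq.2.1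
    obtain ⟨b, hb⟩ := Fin.exists_succAbove_eq hq.2.2
    refine ⟨(a, b), ?_, ?_⟩
    · simp only [mem_filter, mem_univ, true_and]
      rw [← Fin.succAbove_lt_succAbove_iff (p := i), ha, hb]; exact hq.1
    · simp [ha, hb]
  · intros; rfl

lemma mono_sum (s : ℕ) (d : Fin (s + 2) → ℝ) (m : ℕ) (hm : m ≤ s) :
    ∑ i : Fin (s + 2),
        (-1 : ℝ) ^ (i : ℕ) *
          (∏ q ∈ Finset.univ.filter
              (fun q : Fin (s + 2) × Fin (s + 2) => q.1 < q.2 ∧ q.1 ≠ i ∧ q.2 ≠ i),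
            (d q.2 - d q.1)) *
          d i ^ m = 0 := by
  set A : Matrix (Fin (s + 2)) (Fin (s + 2)) ℝ :=
    Matrix.of (fun i j => if j = Fin.last (s + 1) then d i ^ m else d i ^ (j : ℕ)) with hA
  have hdet : A.det = 0 := by
    apply Matrix.det_zero_of_column_eq (i := (⟨m, by omega⟩ : Fin (s + 2))) (j := Fin.last (s + 1))
    · intro h
      have := congrArg Fin.val h
      simp [Fin.last] at this; omega
    · intro k
      have h1 : (⟨m, by omega⟩ : Fin (s + 2)) ≠ Fin.last (s + 1) := by
        intro h; have := congrArg Fin.val h; simp [Fin.last] at this; omega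
      simp [hA, h1]
  rw [Matrix.det_succ_column A (Fin.last (s + 1))] at hdet
  have h0 := congrArg (fun x => (-1 : ℝ) ^ (s + 1) * x) hdet
  simp only [mul_zero] at h0
  rw [Finset.mul_sum] at h0
  rw [← h0]
  refine Finset.sum_congr rfl fun i _ => ?_
  have hsub : A.submatrix i.succAbove (Fin.last (s + 1)).succAbove =
      Matrix.vandermonde (fun k => d (i.succAbove k)) := by
    ext a b
    simp only [Matrix.submatrix_apply, hA, Matrix.of_apply, Matrix.vandermonde_apply]
    rw [Fin.succAbove_last, if_neg (Fin.castSucc_lt_last b).ne, Fin.coe_castSucc]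
  rw [hsub, Matrix.det_vandermonde, reindex]
  simp only [hA, Matrix.of_apply, if_pos rfl, if_true, Fin.val_last]
  have h2 : ((-1 : ℝ)) ^ (s + 1) * (-1 : ℝ) ^ (s + 1) = 1 := by
    rw [← pow_add]; exact Even.neg_one_pow ⟨s + 1, by ring⟩
  rw [pow_add]
  set R := ∏ q ∈ Finset.univ.filter
      (fun q : Fin (s + 2) × Fin (s + 2) => q.1 < q.2 ∧ q.1 ≠ i ∧ q.2 ≠ i),
    (d q.2 - d q.1) with hR
  linear_combination (-((-1 : ℝ) ^ (i : ℕ) * R * d i ^ m)) * h2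

/-- Interpolation lemma: for real numbers `d 0, …, d (s+1)` and
`r i = ∏_{0 ≤ j < k ≤ s+1, j,k ≠ i} (d k - d j)`, any polynomial `p` of degree at
most `s` satisfies `∑ i, (-1)^i * r i * p (d i) = 0`. -/
theorem stmt_3 (s : ℕ) (d : Fin (s + 2) → ℝ) (p : Polynomial ℝ)
    (hp : p.degree ≤ (s : ℕ)) :
    ∑ i : Fin (s + 2),
        (-1 : ℝ) ^ (i : ℕ) *
          (∏ q ∈ Finset.univ.filter
              (fun q : Fin (s + 2) × Fin (s + 2) => q.1 < q.2 ∧ q.1 ≠ i ∧ q.2 ≠ i),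
            (d q.2 - d q.1)) *
          p.eval (d i) = 0 := by
  have hdeg : p.natDegree < s + 1 := by
    rcases eq_or_ne p 0 with rfl | h
    · simp
    · exact Nat.lt_succ_of_le (Polynomial.natDegree_le_iff_degree_le.2 hp)
  have heval : ∀ x : ℝ, p.eval x = ∑ m ∈ range (s + 1), p.coeff m * x ^ m := fun x =>
    Polynomial.eval_eq_sum_range' hdeg x
  simp_rw [heval, Finset.mul_sum]
  rw [Finset.sum_comm]
  refine Finset.sum_eq_zero fun m hm => ?_
  have := mono_sum s d m (by simpa using Nat.lt_succ_iff.1 (mem_range.1 hm))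
  calc ∑ i : Fin (s+2), (-1:ℝ)^(i:ℕ) * (∏ q ∈ Finset.univ.filter
        (fun q : Fin (s + 2) × Fin (s + 2) => q.1 < q.2 ∧ q.1 ≠ i ∧ q.2 ≠ i),
        (d q.2 - d q.1)) * (p.coeff m * d i ^ m)
      = p.coeff m * ∑ i : Fin (s+2), (-1:ℝ)^(i:ℕ) * (∏ q ∈ Finset.univ.filter
        (fun q : Fin (s + 2) × Fin (s + 2) => q.1 < q.2 ∧ q.1 ≠ i ∧ q.2 ≠ i),
        (d q.2 - d q.1)) * d i ^ m := by
        rw [Finset.mul_sum]; exact Finset.sum_congr rfl fun i _ => by ring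
    _ = 0 := by rw [this, mul_zero]
end

section
/- Fix real numbers d_1, ..., d_{s+1}, a real number d_0, and integers s ≥ 0, 0 ≤ ℓ ≤ s. Then ∑_{k=0}^{ℓ} (∏_{s-ℓ+1 ≤ j ≤ s-k} (d_j - d_0)) · (∏_{s-k+1 < j ≤ s+1} (d_j - d_{s-ℓ+1})) = ∏_{s-ℓ+1 < j ≤ s+1} (d_j - d_0), where empty products equal 1. -/
open Finset

lemma stmt_6_insert_top (a b : ℤ) (h : a ≤ b + 1) :
    Finset.Icc a (b + 1) = insert (b + 1) (Finset.Icc a b) := by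
  ext j
  simp only [Finset.mem_Icc, Finset.mem_insert]
  omega

lemma stmt_6_prod_top (f : ℤ → ℝ) (a b : ℤ) (h : a ≤ b + 1) :
    ∏ j ∈ Finset.Icc a (b + 1), f j = (∏ j ∈ Finset.Icc a b, f j) * f (b + 1) := by
  rw [stmt_6_insert_top a b h, Finset.prod_insert (by simp)]
  ring

lemma stmt_6_aux (x y : ℤ → ℝ) (a : ℤ) (hya : y a = 0)
    (hxy : ∀ j, x j - y j = x a) :
    ∀ b : ℤ, a - 1 ≤ b →
      ∑ m ∈ Finset.Icc (a - 1) b,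
          (∏ j ∈ Finset.Icc a m, x j) * (∏ j ∈ Finset.Icc (m + 2) (b + 1), y j)
        = ∏ j ∈ Finset.Icc (a + 1) (b + 1), x j := by
  refine Int.le_induction ?_ ?_
  · rw [Finset.Icc_self, Finset.sum_singleton,
        Finset.Icc_eq_empty (by omega), Finset.Icc_eq_empty (by omega),
        Finset.Icc_eq_empty (by omega)]
    simp
  · intro b hb ih
    have hsum : Finset.Icc (a - 1) (b + 1) = insert (b + 1) (Finset.Icc (a - 1) b) :=
        stmt_6_insert_top _ _ (by omega)
    rw [hsum, Finset.sum_insert (by simp)]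
    have h1 : ∀ m ∈ Finset.Icc (a - 1) b,
        (∏ j ∈ Finset.Icc a m, x j) * (∏ j ∈ Finset.Icc (m + 2) (b + 1 + 1), y j)
        = ((∏ j ∈ Finset.Icc a m, x j) * (∏ j ∈ Finset.Icc (m + 2) (b + 1), y j))
          * y (b + 2) := by
      intro m hm
      simp only [Finset.mem_Icc] at hm
      rw [stmt_6_prod_top y (m + 2) (b + 1) (by omega)]
      ring
    rw [Finset.sum_congr rfl h1, ← Finset.sum_mul, ih]
    rw [Finset.Icc_eq_empty (show ¬(b + 1 + 2 ≤ b + 1 + 1) by omega), Finset.prod_empty,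
      mul_one]
    have h3 : Finset.Icc a (b + 1) = insert a (Finset.Icc (a + 1) (b + 1)) := by
      ext j
      simp only [Finset.mem_Icc, Finset.mem_insert]
      omega
    rw [h3, Finset.prod_insert (by simp), stmt_6_prod_top x (a + 1) (b + 1) (by omega)]
    have e : b + 1 + 1 = b + 2 := by ring
    rw [e]
    have h4 : x (b + 2) = y (b + 2) + x a := by
      have := hxy (b + 2); linarith
    rw [h4]
    ring

/-- The `t = -1` case of the "messy lemma":
`∑_{k=0}^{ℓ} (∏_{s-ℓ+1 ≤ j ≤ s-k} (d j - d 0)) (∏_{s-k+1 < j ≤ s+1} (d j - d (s-ℓ+1)))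
  = ∏_{s-ℓ+1 < j ≤ s+1} (d j - d 0)`. -/
theorem stmt_6 (d : ℤ → ℝ) (s ℓ : ℤ) (hs : 0 ≤ s) (hℓ0 : 0 ≤ ℓ) (hℓs : ℓ ≤ s) :
    ∑ k ∈ Finset.Icc 0 ℓ,
        (∏ j ∈ Finset.Icc (s - ℓ + 1) (s - k), (d j - d 0)) *
          (∏ j ∈ Finset.Icc (s - k + 2) (s + 1), (d j - d (s - ℓ + 1)))
      = ∏ j ∈ Finset.Icc (s - ℓ + 2) (s + 1), (d j - d 0) := by
  have key := stmt_6_aux (fun j => d j - d 0) (fun j => d j - d (s - ℓ + 1))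
    (s - ℓ + 1) (by simp) (fun j => by ring) s (by omega)
  have reindex :
      ∑ k ∈ Finset.Icc 0 ℓ,
        (∏ j ∈ Finset.Icc (s - ℓ + 1) (s - k), (d j - d 0)) *
          (∏ j ∈ Finset.Icc (s - k + 2) (s + 1), (d j - d (s - ℓ + 1)))
      = ∑ m ∈ Finset.Icc (s - ℓ + 1 - 1) s,
        (∏ j ∈ Finset.Icc (s - ℓ + 1) m, (d j - d 0)) *
          (∏ j ∈ Finset.Icc (m + 2) (s + 1), (d j - d (s - ℓ + 1))) := by
    apply Finset.sum_nbij' (i := fun k => s - k) (j := fun m => s - m)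
    all_goals intro a ha <;> simp_all [Finset.mem_Icc] <;> try omega
  rw [reindex, key]
  norm_num
  rw [show s - ℓ + 1 + 1 = s - ℓ + 2 by ring]
end

section
/- Let d = (d_0 < d_1 < ... < d_{s+1}) be a strictly increasing sequence of integers and r_i = ∏_{0 ≤ j < k ≤ s+1, j,k ≠ i}(d_k - d_j). Let z = (z_1 > ... > z_s) be integers, and let γ^z be the table with γ^z_{j,t} = ∏_{i=1}^s |t - z_i| for z_j > t > z_{j+1} (conventions z_0 = ∞, z_{s+1} = -∞) and 0 otherwise. If d_i = -z_i for i = 1,...,s (so the middle entries of d are the negated roots), then ∑_{i=0}^{s+1} (-1)^i r_i · (∑_{j=0}^{s} (-1)^j γ^z_{j,-d_i}) = 0. -/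
open Finset

/-- The interpolation lemma applied to a supernatural table: with a strictly
increasing integer degree sequence `d 0 < … < d (s+1)` whose middle entries are
the negated roots (`d i = -z i` for `1 ≤ i ≤ s`),
`r i = ∏_{0 ≤ j < k ≤ s+1, j,k ≠ i} (d k - d j)`, and `γ` the supernatural table
with root sequence `z`, one has
`∑_{i=0}^{s+1} (-1)^i r i (∑_{j=0}^{s} (-1)^j γ j (-(d i))) = 0`. -/
theorem stmt_9 (s : ℕ) (d z : ℤ → ℤ)
    (hd : StrictMonoOn d (Set.Icc (0 : ℤ) ((s : ℤ) + 1)))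
    (hz : ∀ i : ℤ, 1 ≤ i → i < (s : ℤ) → z (i + 1) < z i)
    (hdz : ∀ i : ℤ, 1 ≤ i → i ≤ (s : ℤ) → d i = -z i)
    (γ : ℤ → ℤ → ℝ)
    (hγ : ∀ j t : ℤ, 0 ≤ j → j ≤ (s : ℤ) →
      γ j t =
        if (j = 0 ∨ t < z j) ∧ (j = (s : ℤ) ∨ z (j + 1) < t) then
          ∏ i ∈ Finset.Icc (1 : ℤ) (s : ℤ), |(t : ℝ) - (z i : ℝ)|
        else 0) :
    ∑ i ∈ Finset.Icc (0 : ℤ) ((s : ℤ) + 1),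
        (-1 : ℝ) ^ i.toNat *
          (∏ q ∈ ((Finset.Icc (0 : ℤ) ((s : ℤ) + 1)) ×ˢ
                (Finset.Icc (0 : ℤ) ((s : ℤ) + 1))).filter
              (fun q => q.1 < q.2 ∧ q.1 ≠ i ∧ q.2 ≠ i),
            ((d q.2 - d q.1 : ℤ) : ℝ)) *
          (∑ j ∈ Finset.Icc (0 : ℤ) (s : ℤ), (-1 : ℝ) ^ j.toNat * γ j (-(d i))) = 0 := by
  have hn : (0:ℤ) ≤ (s:ℤ) := Int.natCast_nonneg s
  have hdlt : ∀ a b : ℤ, 0 ≤ a → a < b → b ≤ (s:ℤ) + 1 → d a < d b := by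
    intro a b ha hab hb
    exact hd ⟨ha, by omega⟩ ⟨by omega, hb⟩ hab
  -- middle γ's vanish
  have hmid : ∀ i ∈ Finset.Icc (1:ℤ) (s:ℤ), ∀ j ∈ Finset.Icc (0:ℤ) (s:ℤ),
      γ j (-(d i)) = 0 := by
    intro i hi j hj
    simp only [Finset.mem_Icc] at hi hj
    rw [hγ j _ hj.1 hj.2]
    split
    · apply Finset.prod_eq_zero (Finset.mem_Icc.mpr hi)
      rw [hdz i hi.1 hi.2]
      push_cast
      simp
    · rfl
  -- inner sum at i = 0
  have hin0 : ∑ j ∈ Finset.Icc (0:ℤ) (s:ℤ), (-1:ℝ)^j.toNat * γ j (-(d 0)) =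
      ∏ k ∈ Finset.Icc (1:ℤ) (s:ℤ), ((d k - d 0 : ℤ) : ℝ) := by
    rw [Finset.sum_eq_single_of_mem 0 (by simp [hn])]
    · rw [hγ 0 _ le_rfl hn]
      have hcond : ((0:ℤ) = 0 ∨ (-(d 0):ℤ) < z 0) ∧ ((0:ℤ) = (s:ℤ) ∨ z (0+1) < -(d 0)) := by
        refine ⟨Or.inl rfl, ?_⟩
        rcases eq_or_lt_of_le hn with h | h
        · exact Or.inl h
        · right
          have h01 : z (0+1) = z 1 := by norm_num
          have h1 : d 1 = -z 1 := hdz 1 le_rfl (by omega)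
          have h2 : d 0 < d 1 := hdlt 0 1 le_rfl one_pos (by omega)
          omega
      rw [if_pos hcond]
      simp only [Int.toNat_zero, pow_zero, one_mul]
      apply Finset.prod_congr rfl
      intro k hk
      simp only [Finset.mem_Icc] at hk
      have hzk : z k = - d k := by have := hdz k hk.1 hk.2; omega
      have hlt : d 0 < d k := hdlt 0 k le_rfl (by omega) (by omega)
      rw [hzk, abs_of_pos]
      · push_cast; ring
      · have : ((d 0 : ℝ)) < (d k : ℝ) := by exact_mod_cast hlt
        push_cast
        linarith
    · intro j hj hj0
      simp only [Finset.mem_Icc] at hj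
      have : γ j (-(d 0)) = 0 := by
        rw [hγ j _ hj.1 hj.2, if_neg]
        rintro ⟨h1, -⟩
        have hjz : d j = -z j := hdz j (by omega) hj.2
        have hlt : d 0 < d j := hdlt 0 j le_rfl (by omega) (by omega)
        rcases h1 with h | h
        · exact hj0 h
        · omega
      rw [this, mul_zero]
  -- inner sum at i = s+1
  have hin1 : ∑ j ∈ Finset.Icc (0:ℤ) (s:ℤ), (-1:ℝ)^j.toNat * γ j (-(d ((s:ℤ)+1))) =
      (-1:ℝ)^s * ∏ k ∈ Finset.Icc (1:ℤ) (s:ℤ), ((d ((s:ℤ)+1) - d k : ℤ) : ℝ) := by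
    rw [Finset.sum_eq_single_of_mem (s:ℤ) (by simp [hn])]
    · rw [hγ (s:ℤ) _ hn le_rfl]
      have hcond : ((s:ℤ) = 0 ∨ (-(d ((s:ℤ)+1)):ℤ) < z (s:ℤ)) ∧
          ((s:ℤ) = (s:ℤ) ∨ z ((s:ℤ)+1) < -(d ((s:ℤ)+1))) := by
        refine ⟨?_, Or.inl rfl⟩
        rcases eq_or_lt_of_le hn with h | h
        · exact Or.inl h.symm
        · right
          have h1 : d (s:ℤ) = -z (s:ℤ) := hdz (s:ℤ) (by omega) le_rfl
          have h2 : d (s:ℤ) < d ((s:ℤ)+1) := hdlt (s:ℤ) ((s:ℤ)+1) hn (by omega) le_rfl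
          omega
      rw [if_pos hcond]
      have hts : ((s:ℤ)).toNat = s := by omega
      rw [hts]
      congr 1
      apply Finset.prod_congr rfl
      intro k hk
      simp only [Finset.mem_Icc] at hk
      have hzk : z k = - d k := by have := hdz k hk.1 hk.2; omega
      have hlt : d k < d ((s:ℤ)+1) := hdlt k ((s:ℤ)+1) (by omega) (by omega) le_rfl
      rw [hzk, abs_of_neg]
      · push_cast; ring
      · have : ((d k : ℝ)) < (d ((s:ℤ)+1) : ℝ) := by exact_mod_cast hlt
        push_cast
        linarith
    · intro j hj hjs
      simp only [Finset.mem_Icc] at hj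
      have : γ j (-(d ((s:ℤ)+1))) = 0 := by
        rw [hγ j _ hj.1 hj.2, if_neg]
        rintro ⟨-, h2⟩
        have hjz : d (j+1) = -z (j+1) := hdz (j+1) (by omega) (by omega)
        have hlt : d (j+1) < d ((s:ℤ)+1) := hdlt (j+1) ((s:ℤ)+1) (by omega) (by omega) le_rfl
        rcases h2 with h | h
        · exact hjs h
        · omega
      rw [this, mul_zero]
  -- the key product identity
  have hkey :
      (∏ q ∈ ((Finset.Icc (0 : ℤ) ((s : ℤ) + 1)) ×ˢ
            (Finset.Icc (0 : ℤ) ((s : ℤ) + 1))).filter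
          (fun q => q.1 < q.2 ∧ q.1 ≠ 0 ∧ q.2 ≠ 0),
        ((d q.2 - d q.1 : ℤ) : ℝ)) *
      (∏ k ∈ Finset.Icc (1:ℤ) (s:ℤ), ((d k - d 0 : ℤ) : ℝ)) =
      (∏ q ∈ ((Finset.Icc (0 : ℤ) ((s : ℤ) + 1)) ×ˢ
            (Finset.Icc (0 : ℤ) ((s : ℤ) + 1))).filter
          (fun q => q.1 < q.2 ∧ q.1 ≠ (s:ℤ)+1 ∧ q.2 ≠ (s:ℤ)+1),
        ((d q.2 - d q.1 : ℤ) : ℝ)) *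
      (∏ k ∈ Finset.Icc (1:ℤ) (s:ℤ), ((d ((s:ℤ)+1) - d k : ℤ) : ℝ)) := by
    have hinj0 : ∀ a ∈ Finset.Icc (1:ℤ) (s:ℤ), ∀ b ∈ Finset.Icc (1:ℤ) (s:ℤ),
        ((0:ℤ), a) = ((0:ℤ), b) → a = b := by
      intro a _ b _ h
      simpa using h
    have hinj1 : ∀ a ∈ Finset.Icc (1:ℤ) (s:ℤ), ∀ b ∈ Finset.Icc (1:ℤ) (s:ℤ),
        (a, (s:ℤ)+1) = (b, (s:ℤ)+1) → a = b := by
      intro a _ b _ h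
      simpa using h
    have h0 : (∏ k ∈ Finset.Icc (1:ℤ) (s:ℤ), ((d k - d 0 : ℤ) : ℝ)) =
        ∏ q ∈ (Finset.Icc (1:ℤ) (s:ℤ)).image (fun k => ((0:ℤ), k)),
          ((d q.2 - d q.1 : ℤ) : ℝ) := by
      rw [Finset.prod_image hinj0]
    have h1 : (∏ k ∈ Finset.Icc (1:ℤ) (s:ℤ), ((d ((s:ℤ)+1) - d k : ℤ) : ℝ)) =
        ∏ q ∈ (Finset.Icc (1:ℤ) (s:ℤ)).image (fun k => (k, (s:ℤ)+1)),
          ((d q.2 - d q.1 : ℤ) : ℝ) := by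
      rw [Finset.prod_image hinj1]
    have hu0 : ((Finset.Icc (0 : ℤ) ((s : ℤ) + 1)) ×ˢ
            (Finset.Icc (0 : ℤ) ((s : ℤ) + 1))).filter
          (fun q => q.1 < q.2 ∧ q.1 ≠ 0 ∧ q.2 ≠ 0) ∪
        (Finset.Icc (1:ℤ) (s:ℤ)).image (fun k => ((0:ℤ), k)) =
        ((Finset.Icc (0 : ℤ) ((s : ℤ) + 1)) ×ˢ
            (Finset.Icc (0 : ℤ) ((s : ℤ) + 1))).filter
          (fun q => q.1 < q.2 ∧ ¬(q.1 = 0 ∧ q.2 = (s:ℤ)+1)) := by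
      ext ⟨a, b⟩
      simp only [Finset.mem_union, Finset.mem_filter, Finset.mem_product, Finset.mem_image,
        Finset.mem_Icc, Prod.mk.injEq]
      constructor
      · rintro (⟨⟨⟨ha0, ha1⟩, hb0, hb1⟩, hab, h1, h2⟩ | ⟨x, ⟨hx1, hx2⟩, hxa, hxb⟩)
        · exact ⟨⟨⟨ha0, ha1⟩, hb0, hb1⟩, hab, by omega⟩
        · refine ⟨⟨⟨by omega, by omega⟩, by omega, by omega⟩, by omega, by omega⟩
      · rintro ⟨⟨⟨ha0, ha1⟩, hb0, hb1⟩, hab, hne⟩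
        by_cases ha : a = 0
        · right; exact ⟨b, ⟨by omega, by omega⟩, ha.symm, rfl⟩
        · left; exact ⟨⟨⟨ha0, ha1⟩, hb0, hb1⟩, hab, ha, by omega⟩
    have hu1 : ((Finset.Icc (0 : ℤ) ((s : ℤ) + 1)) ×ˢ
            (Finset.Icc (0 : ℤ) ((s : ℤ) + 1))).filter
          (fun q => q.1 < q.2 ∧ q.1 ≠ (s:ℤ)+1 ∧ q.2 ≠ (s:ℤ)+1) ∪
        (Finset.Icc (1:ℤ) (s:ℤ)).image (fun k => (k, (s:ℤ)+1)) =
        ((Finset.Icc (0 : ℤ) ((s : ℤ) + 1)) ×ˢ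
            (Finset.Icc (0 : ℤ) ((s : ℤ) + 1))).filter
          (fun q => q.1 < q.2 ∧ ¬(q.1 = 0 ∧ q.2 = (s:ℤ)+1)) := by
      ext ⟨a, b⟩
      simp only [Finset.mem_union, Finset.mem_filter, Finset.mem_product, Finset.mem_image,
        Finset.mem_Icc, Prod.mk.injEq]
      constructor
      · rintro (⟨⟨⟨ha0, ha1⟩, hb0, hb1⟩, hab, h1, h2⟩ | ⟨x, ⟨hx1, hx2⟩, hxa, hxb⟩)
        · exact ⟨⟨⟨ha0, ha1⟩, hb0, hb1⟩, hab, by omega⟩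
        · refine ⟨⟨⟨by omega, by omega⟩, by omega, by omega⟩, by omega, by omega⟩
      · rintro ⟨⟨⟨ha0, ha1⟩, hb0, hb1⟩, hab, hne⟩
        by_cases hb : b = (s:ℤ)+1
        · right; exact ⟨a, ⟨by omega, by omega⟩, rfl, hb.symm⟩
        · left; exact ⟨⟨⟨ha0, ha1⟩, hb0, hb1⟩, hab, by omega, hb⟩
    have hd0 : Disjoint (((Finset.Icc (0 : ℤ) ((s : ℤ) + 1)) ×ˢ
            (Finset.Icc (0 : ℤ) ((s : ℤ) + 1))).filter
          (fun q => q.1 < q.2 ∧ q.1 ≠ 0 ∧ q.2 ≠ 0))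
        ((Finset.Icc (1:ℤ) (s:ℤ)).image (fun k => ((0:ℤ), k))) := by
      rw [Finset.disjoint_left]
      rintro ⟨a, b⟩ hq hq'
      simp only [Finset.mem_filter, Finset.mem_product, Finset.mem_Icc] at hq
      simp only [Finset.mem_image, Finset.mem_Icc, Prod.mk.injEq] at hq'
      obtain ⟨x, ⟨hx1, hx2⟩, hxa, hxb⟩ := hq'
      exact hq.2.2.1 hxa.symm
    have hd1 : Disjoint (((Finset.Icc (0 : ℤ) ((s : ℤ) + 1)) ×ˢ
            (Finset.Icc (0 : ℤ) ((s : ℤ) + 1))).filter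
          (fun q => q.1 < q.2 ∧ q.1 ≠ (s:ℤ)+1 ∧ q.2 ≠ (s:ℤ)+1))
        ((Finset.Icc (1:ℤ) (s:ℤ)).image (fun k => (k, (s:ℤ)+1))) := by
      rw [Finset.disjoint_left]
      rintro ⟨a, b⟩ hq hq'
      simp only [Finset.mem_filter, Finset.mem_product, Finset.mem_Icc] at hq
      simp only [Finset.mem_image, Finset.mem_Icc, Prod.mk.injEq] at hq'
      obtain ⟨x, ⟨hx1, hx2⟩, hxa, hxb⟩ := hq'
      exact hq.2.2.2 hxb.symm
    rw [h0, h1, ← Finset.prod_union hd0, ← Finset.prod_union hd1, hu0, hu1]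
  -- split the outer sum
  have hsplit : Finset.Icc (0:ℤ) ((s:ℤ)+1) =
      insert 0 (insert ((s:ℤ)+1) (Finset.Icc (1:ℤ) (s:ℤ))) := by
    ext x
    simp only [Finset.mem_Icc, Finset.mem_insert]
    omega
  have hsum : ∀ F : ℤ → ℝ, ∑ i ∈ Finset.Icc (0:ℤ) ((s:ℤ)+1), F i =
      F 0 + (F ((s:ℤ)+1) + ∑ i ∈ Finset.Icc (1:ℤ) (s:ℤ), F i) := by
    intro F
    rw [hsplit, Finset.sum_insert (by simp only [Finset.mem_insert, Finset.mem_Icc]; omega), Finset.sum_insert (by simp only [Finset.mem_Icc]; omega)]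
  rw [hsum]
  have hmidsum : ∑ i ∈ Finset.Icc (1:ℤ) (s:ℤ),
      (-1 : ℝ) ^ i.toNat *
        (∏ q ∈ ((Finset.Icc (0 : ℤ) ((s : ℤ) + 1)) ×ˢ
              (Finset.Icc (0 : ℤ) ((s : ℤ) + 1))).filter
            (fun q => q.1 < q.2 ∧ q.1 ≠ i ∧ q.2 ≠ i),
          ((d q.2 - d q.1 : ℤ) : ℝ)) *
        (∑ j ∈ Finset.Icc (0 : ℤ) (s : ℤ), (-1 : ℝ) ^ j.toNat * γ j (-(d i))) = 0 := by
    apply Finset.sum_eq_zero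
    intro i hi
    have : ∑ j ∈ Finset.Icc (0:ℤ) (s:ℤ), (-1:ℝ)^j.toNat * γ j (-(d i)) = 0 :=
      Finset.sum_eq_zero (fun j hj => by rw [hmid i hi j hj, mul_zero])
    rw [this, mul_zero]
  rw [hmidsum, hin0, hin1]
  have ht0 : ((0:ℤ)).toNat = 0 := rfl
  have ht1 : (((s:ℤ))+1).toNat = s+1 := by omega
  rw [ht0, ht1]
  have he : ((-1:ℝ)^s) * ((-1:ℝ)^s) = 1 := by
    rw [← pow_add]
    exact Even.neg_one_pow ⟨s, rfl⟩
  rw [pow_zero, pow_succ]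
  linear_combination hkey - (∏ q ∈ ((Finset.Icc (0 : ℤ) ((s : ℤ) + 1)) ×ˢ
            (Finset.Icc (0 : ℤ) ((s : ℤ) + 1))).filter
          (fun q => q.1 < q.2 ∧ q.1 ≠ (s:ℤ)+1 ∧ q.2 ≠ (s:ℤ)+1),
        ((d q.2 - d q.1 : ℤ) : ℝ)) *
      (∏ k ∈ Finset.Icc (1:ℤ) (s:ℤ), ((d ((s:ℤ)+1) - d k : ℤ) : ℝ)) * he
end

section
/- Let d_0 < d_1 < ... < d_{s+1} be real numbers and 0 ≤ ℓ ≤ s. Then ∑_{k=0}^{ℓ} (∏_{1≤j≤s-k}(d_j-d_0)) · (∏_{1≤i<j≤s+1, s+1-k<j}(d_j-d_i)) · (∏_{1≤i<j≤s+1-k, i,j≠s+1-ℓ}(d_j-d_i)) = ∏_{0≤i<j≤s+1, i,j ≠ s+1-ℓ}(d_j-d_i). -/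
open Finset

private lemma icc_insert_top {m N : ℤ} (h : m ≤ N + 1) :
    Finset.Icc m (N + 1) = insert (N + 1) (Finset.Icc m N) := by
  ext x; simp only [Finset.mem_Icc, Finset.mem_insert]; omega

private lemma icc_insert_bot {m N : ℤ} (h : m ≤ N) :
    Finset.Icc m N = insert m (Finset.Icc (m + 1) N) := by
  ext x; simp only [Finset.mem_Icc, Finset.mem_insert]; omega

private lemma tele (a b : ℤ → ℝ) (m : ℤ) (hb : b m = 0) :
    ∀ N : ℤ, m ≤ N → (∀ n, m ≤ n → n ≤ N → a n - b n = a m) →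
    ∑ n ∈ Finset.Icc m N, (∏ j ∈ Finset.Icc m (n - 1), a j) *
        (∏ j ∈ Finset.Icc (n + 1) N, b j)
      = ∏ j ∈ Finset.Icc (m + 1) N, a j := by
  intro N hN
  refine Int.le_induction
    (motive := fun N _ => (∀ n, m ≤ n → n ≤ N → a n - b n = a m) →
      ∑ n ∈ Finset.Icc m N, (∏ j ∈ Finset.Icc m (n - 1), a j) *
          (∏ j ∈ Finset.Icc (n + 1) N, b j)
        = ∏ j ∈ Finset.Icc (m + 1) N, a j) ?_ ?_ N hN
  · intro _
    rw [Finset.Icc_self, Finset.sum_singleton,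
        Finset.Icc_eq_empty (by omega : ¬ m ≤ m - 1),
        Finset.Icc_eq_empty (by omega : ¬ m + 1 ≤ m)]
    simp
  · intro N hN ih hab
    have h1 : a (N + 1) - b (N + 1) = a m := hab _ (by omega) le_rfl
    rw [icc_insert_top (by omega : m ≤ N + 1),
        Finset.sum_insert (by simp only [Finset.mem_Icc]; omega)]
    rw [Finset.Icc_eq_empty (by omega : ¬ N + 1 + 1 ≤ N + 1)]
    rw [show Finset.Icc m (N + 1 - 1) = Finset.Icc m N by norm_num]
    have hterm : ∀ n ∈ Finset.Icc m N,
        (∏ j ∈ Finset.Icc m (n - 1), a j) * (∏ j ∈ Finset.Icc (n + 1) (N + 1), b j)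
        = b (N + 1) * ((∏ j ∈ Finset.Icc m (n - 1), a j) *
            (∏ j ∈ Finset.Icc (n + 1) N, b j)) := by
      intro n hn
      simp only [Finset.mem_Icc] at hn
      rw [icc_insert_top (by omega : n + 1 ≤ N + 1),
          Finset.prod_insert (by simp only [Finset.mem_Icc]; omega)]
      ring
    rw [Finset.sum_congr rfl hterm, ← Finset.mul_sum,
        ih (fun n hn1 hn2 => hab n hn1 (by omega))]
    rw [icc_insert_top (by omega : m + 1 ≤ N + 1),
        Finset.prod_insert (by simp only [Finset.mem_Icc]; omega)]
    rw [icc_insert_bot (by omega : m ≤ N),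
        Finset.prod_insert (by simp only [Finset.mem_Icc]; omega)]
    simp only [Finset.prod_empty]
    linear_combination (-(∏ j ∈ Finset.Icc (m + 1) N, a j)) * h1

-- C_k on the big square
private lemma prod_shrink (f : ℤ × ℤ → ℝ) (s m n : ℤ) (hn : n ≤ s + 1) :
    ∏ q ∈ ((Finset.Icc (1:ℤ) n) ×ˢ (Finset.Icc (1:ℤ) n)).filter
        (fun q => q.1 < q.2 ∧ q.1 ≠ m ∧ q.2 ≠ m), f q
    = ∏ q ∈ ((Finset.Icc (1:ℤ) (s+1)) ×ˢ (Finset.Icc (1:ℤ) (s+1))).filter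
        (fun q => q.1 < q.2 ∧ q.2 ≤ n ∧ q.1 ≠ m ∧ q.2 ≠ m), f q := by
  refine Finset.prod_congr ?_ (fun _ _ => rfl)
  ext ⟨i, j⟩
  simp only [Finset.mem_filter, Finset.mem_product, Finset.mem_Icc]
  omega

-- B_k split off the i = m row
private lemma prod_B_split (f : ℤ × ℤ → ℝ) (s m n : ℤ) (hm : 1 ≤ m) (hmn : m ≤ n)
    (hn : n ≤ s + 1) :
    ∏ q ∈ ((Finset.Icc (1:ℤ) (s+1)) ×ˢ (Finset.Icc (1:ℤ) (s+1))).filter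
        (fun q => q.1 < q.2 ∧ n < q.2), f q
    = (∏ q ∈ ((Finset.Icc (1:ℤ) (s+1)) ×ˢ (Finset.Icc (1:ℤ) (s+1))).filter
        (fun q => q.1 < q.2 ∧ n < q.2 ∧ q.1 ≠ m), f q)
      * ∏ j ∈ Finset.Icc (n+1) (s+1), f (m, j) := by
  rw [← Finset.prod_filter_mul_prod_filter_not
    (((Finset.Icc (1:ℤ) (s+1)) ×ˢ (Finset.Icc (1:ℤ) (s+1))).filter
        (fun q => q.1 < q.2 ∧ n < q.2)) (fun q => q.1 ≠ m) f]
  congr 1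
  · refine Finset.prod_congr ?_ (fun _ _ => rfl)
    rw [Finset.filter_filter]
    ext ⟨i, j⟩
    simp only [Finset.mem_filter, Finset.mem_product, Finset.mem_Icc]
    omega
  · rw [show (((Finset.Icc (1:ℤ) (s+1)) ×ˢ (Finset.Icc (1:ℤ) (s+1))).filter
        (fun q => q.1 < q.2 ∧ n < q.2)).filter (fun q => ¬ q.1 ≠ m)
        = {m} ×ˢ Finset.Icc (n+1) (s+1) by
      rw [Finset.filter_filter]
      ext ⟨i, j⟩
      simp only [Finset.mem_filter, Finset.mem_product, Finset.mem_Icc,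
        Finset.mem_singleton, not_not]
      omega]
    rw [Finset.prod_product, Finset.prod_singleton]

-- merge C_k and the i ≠ m part of B_k into C_full
private lemma prod_merge (f : ℤ × ℤ → ℝ) (s m n : ℤ) (hmn : m ≤ n) :
    (∏ q ∈ ((Finset.Icc (1:ℤ) (s+1)) ×ˢ (Finset.Icc (1:ℤ) (s+1))).filter
        (fun q => q.1 < q.2 ∧ n < q.2 ∧ q.1 ≠ m), f q)
    * (∏ q ∈ ((Finset.Icc (1:ℤ) (s+1)) ×ˢ (Finset.Icc (1:ℤ) (s+1))).filter
        (fun q => q.1 < q.2 ∧ q.2 ≤ n ∧ q.1 ≠ m ∧ q.2 ≠ m), f q)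
    = ∏ q ∈ ((Finset.Icc (1:ℤ) (s+1)) ×ˢ (Finset.Icc (1:ℤ) (s+1))).filter
        (fun q => q.1 < q.2 ∧ q.1 ≠ m ∧ q.2 ≠ m), f q := by
  rw [← Finset.prod_union (by
    rw [Finset.disjoint_left]
    rintro ⟨i, j⟩ h1 h2
    simp only [Finset.mem_filter, Finset.mem_product, Finset.mem_Icc] at h1 h2
    omega)]
  refine Finset.prod_congr ?_ (fun _ _ => rfl)
  ext ⟨i, j⟩
  simp only [Finset.mem_union, Finset.mem_filter, Finset.mem_product, Finset.mem_Icc]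
  omega

-- RHS: split off the i = 0 row
private lemma prod_RHS (f : ℤ × ℤ → ℝ) (s m : ℤ) (hm : 1 ≤ m) (hms : m ≤ s + 1) :
    ∏ q ∈ ((Finset.Icc (0:ℤ) (s+1)) ×ˢ (Finset.Icc (0:ℤ) (s+1))).filter
        (fun q => q.1 < q.2 ∧ q.1 ≠ m ∧ q.2 ≠ m), f q
    = ((∏ j ∈ Finset.Icc (1:ℤ) (m-1), f (0, j))
        * ∏ j ∈ Finset.Icc (m+1) (s+1), f (0, j))
      * ∏ q ∈ ((Finset.Icc (1:ℤ) (s+1)) ×ˢ (Finset.Icc (1:ℤ) (s+1))).filter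
          (fun q => q.1 < q.2 ∧ q.1 ≠ m ∧ q.2 ≠ m), f q := by
  rw [← Finset.prod_filter_mul_prod_filter_not
    (((Finset.Icc (0:ℤ) (s+1)) ×ˢ (Finset.Icc (0:ℤ) (s+1))).filter
        (fun q => q.1 < q.2 ∧ q.1 ≠ m ∧ q.2 ≠ m)) (fun q => q.1 = 0) f]
  congr 1
  · rw [show (((Finset.Icc (0:ℤ) (s+1)) ×ˢ (Finset.Icc (0:ℤ) (s+1))).filter
        (fun q => q.1 < q.2 ∧ q.1 ≠ m ∧ q.2 ≠ m)).filter (fun q => q.1 = 0)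
        = {(0:ℤ)} ×ˢ (Finset.Icc (1:ℤ) (m-1) ∪ Finset.Icc (m+1) (s+1)) by
      rw [Finset.filter_filter]
      ext ⟨i, j⟩
      simp only [Finset.mem_filter, Finset.mem_product, Finset.mem_Icc,
        Finset.mem_singleton, Finset.mem_union]
      omega]
    rw [Finset.prod_product, Finset.prod_singleton,
        Finset.prod_union (by
          rw [Finset.disjoint_left]
          intro x h1 h2
          simp only [Finset.mem_Icc] at h1 h2
          omega)]
  · refine Finset.prod_congr ?_ (fun _ _ => rfl)
    rw [Finset.filter_filter]
    ext ⟨i, j⟩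
    simp only [Finset.mem_filter, Finset.mem_product, Finset.mem_Icc]
    omega

-- A_k split
private lemma prod_A_split (a : ℤ → ℝ) (m n : ℤ) (hm : 1 ≤ m) (hmn : m ≤ n) :
    ∏ j ∈ Finset.Icc (1:ℤ) (n-1), a j
    = (∏ j ∈ Finset.Icc (1:ℤ) (m-1), a j) * ∏ j ∈ Finset.Icc m (n-1), a j := by
  rw [← Finset.prod_union (by
    rw [Finset.disjoint_left]
    intro x h1 h2
    simp only [Finset.mem_Icc] at h1 h2
    omega)]
  refine Finset.prod_congr ?_ (fun _ _ => rfl)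
  ext x
  simp only [Finset.mem_Icc, Finset.mem_union]
  omega


/-- The central computation in the proof of the Positivity Theorem of
Eisenbud–Schreyer: for `d 0 < … < d (s+1)` real and `0 ≤ ℓ ≤ s`,
`∑_{k=0}^{ℓ} (∏_{1≤j≤s-k}(d j - d 0)) ⬝ (∏_{1≤i<j≤s+1, s+1-k<j}(d j - d i)) ⬝
 (∏_{1≤i<j≤s+1-k, i,j≠s+1-ℓ}(d j - d i)) = ∏_{0≤i<j≤s+1, i,j≠s+1-ℓ}(d j - d i)`. -/
theorem stmt_11 (s : ℤ) (hs : 0 ≤ s) (d : ℤ → ℝ)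
    (hd : StrictMonoOn d (Set.Icc (0 : ℤ) (s + 1)))
    (ℓ : ℤ) (hℓ0 : 0 ≤ ℓ) (hℓ : ℓ ≤ s) :
    ∑ k ∈ Finset.Icc (0 : ℤ) ℓ,
        (∏ j ∈ Finset.Icc (1 : ℤ) (s - k), (d j - d 0)) *
          (∏ q ∈ ((Finset.Icc (1 : ℤ) (s + 1)) ×ˢ (Finset.Icc (1 : ℤ) (s + 1))).filter
              (fun q => q.1 < q.2 ∧ s + 1 - k < q.2),
            (d q.2 - d q.1)) *
          (∏ q ∈ ((Finset.Icc (1 : ℤ) (s + 1 - k)) ×ˢ (Finset.Icc (1 : ℤ) (s + 1 - k))).filter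
              (fun q => q.1 < q.2 ∧ q.1 ≠ s + 1 - ℓ ∧ q.2 ≠ s + 1 - ℓ),
            (d q.2 - d q.1))
      = ∏ q ∈ ((Finset.Icc (0 : ℤ) (s + 1)) ×ˢ (Finset.Icc (0 : ℤ) (s + 1))).filter
            (fun q => q.1 < q.2 ∧ q.1 ≠ s + 1 - ℓ ∧ q.2 ≠ s + 1 - ℓ),
          (d q.2 - d q.1) := by
  have key : ∀ k ∈ Finset.Icc (0 : ℤ) ℓ,
      (∏ j ∈ Finset.Icc (1 : ℤ) (s - k), (d j - d 0)) *
          (∏ q ∈ ((Finset.Icc (1 : ℤ) (s + 1)) ×ˢ (Finset.Icc (1 : ℤ) (s + 1))).filter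
              (fun q => q.1 < q.2 ∧ s + 1 - k < q.2),
            (d q.2 - d q.1)) *
          (∏ q ∈ ((Finset.Icc (1 : ℤ) (s + 1 - k)) ×ˢ (Finset.Icc (1 : ℤ) (s + 1 - k))).filter
              (fun q => q.1 < q.2 ∧ q.1 ≠ s + 1 - ℓ ∧ q.2 ≠ s + 1 - ℓ),
            (d q.2 - d q.1))
      = ((∏ q ∈ ((Finset.Icc (1 : ℤ) (s + 1)) ×ˢ (Finset.Icc (1 : ℤ) (s + 1))).filter
              (fun q => q.1 < q.2 ∧ q.1 ≠ s + 1 - ℓ ∧ q.2 ≠ s + 1 - ℓ),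
            (d q.2 - d q.1)) *
          (∏ j ∈ Finset.Icc (1 : ℤ) (s + 1 - ℓ - 1), (d j - d 0))) *
        ((∏ j ∈ Finset.Icc (s + 1 - ℓ) (s + 1 - k - 1), (d j - d 0)) *
          (∏ j ∈ Finset.Icc (s + 1 - k + 1) (s + 1), (d j - d (s + 1 - ℓ)))) := by
    intro k hk
    simp only [Finset.mem_Icc] at hk
    rw [show s - k = s + 1 - k - 1 by ring]
    rw [prod_A_split (fun j => d j - d 0) (s + 1 - ℓ) (s + 1 - k) (by omega) (by omega)]
    rw [prod_B_split (fun q => d q.2 - d q.1) s (s + 1 - ℓ) (s + 1 - k)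
      (by omega) (by omega) (by omega)]
    rw [prod_shrink (fun q => d q.2 - d q.1) s (s + 1 - ℓ) (s + 1 - k) (by omega)]
    rw [← prod_merge (fun q => d q.2 - d q.1) s (s + 1 - ℓ) (s + 1 - k) (by omega)]
    ring
  rw [Finset.sum_congr rfl key, ← Finset.mul_sum]
  have hre : ∑ k ∈ Finset.Icc (0 : ℤ) ℓ,
      ((∏ j ∈ Finset.Icc (s + 1 - ℓ) (s + 1 - k - 1), (d j - d 0)) *
        (∏ j ∈ Finset.Icc (s + 1 - k + 1) (s + 1), (d j - d (s + 1 - ℓ))))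
      = ∑ n ∈ Finset.Icc (s + 1 - ℓ) (s + 1),
      ((∏ j ∈ Finset.Icc (s + 1 - ℓ) (n - 1), (d j - d 0)) *
        (∏ j ∈ Finset.Icc (n + 1) (s + 1), (d j - d (s + 1 - ℓ)))) := by
    rw [show Finset.Icc (s + 1 - ℓ) (s + 1)
        = (Finset.Icc (0 : ℤ) ℓ).map ⟨fun k => s + 1 - k, sub_right_injective⟩ by
      ext n
      simp only [Finset.mem_map, Finset.mem_Icc, Function.Embedding.coeFn_mk]
      constructor
      · intro h; exact ⟨s + 1 - n, by omega, by omega⟩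
      · rintro ⟨k, hk, rfl⟩; omega]
    rw [Finset.sum_map]
    simp
  rw [hre, tele (fun j => d j - d 0) (fun j => d j - d (s + 1 - ℓ)) (s + 1 - ℓ)
    (by simp) (s + 1) (by omega) (by intro n h1 h2; ring)]
  rw [prod_RHS (fun q => d q.2 - d q.1) s (s + 1 - ℓ) (by omega) (by omega)]
  ring
end

section
/- For d = (d_0,...,d_{s+1}) a strictly increasing integer sequence, define the pure Betti table β^d by β^d_{i,j} = r_i(d) = ∏_{0≤j'<k≤s+1, j',k≠i}(d_k - d_{j'}) if j = d_i and 0 otherwise. For 0 ≤ τ and c ∈ Z, define the pairing ⟨β, γ⟩_{c,τ} = ∑_{i,j,k: j ≤ i, (j < τ or j ≤ i-2)} (-1)^{i-j} β_{i,k} γ_{j,-k} + ∑_{i,j,k,ε: 0≤ε≤1, j=τ, i=j+ε, k ≤ c+ε} (-1)^{i-j} β_{i,k} γ_{j,-k}. Then: if τ ≥ 1 and c < d_τ, ⟨β^d, γ⟩_{c,τ} = L(d, φ^τ)(γ), and if c ≥ d_{τ+1}, ⟨β^d, γ⟩_{c,τ} = L(d, φ^{τ+1})(γ), where L(d,ψ)(γ)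 = ∑_{i=0}^{s+1} (-1)^i r_i(d) ∑_{j=0}^{ψ_i} (-1)^j γ_{j,d_i} and φ^j(s) = (0,...,j-2, j-1, j-1, j-1, j,...,s-1). -/
open Finset

/-- Herzog–Kühl number `r i = ∏_{0 ≤ j < k ≤ s+1, j,k ≠ i} (d k - d j)` (as a real number). -/
noncomputable def HK (s : ℤ) (d : ℤ → ℤ) (i : ℤ) : ℝ :=
  ∏ q ∈ ((Finset.Icc (0 : ℤ) (s + 1)) ×ˢ (Finset.Icc (0 : ℤ) (s + 1))).filter
      (fun q => q.1 < q.2 ∧ q.1 ≠ i ∧ q.2 ≠ i),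
    ((d q.2 - d q.1 : ℤ) : ℝ)

/-- The functional `L(d, ψ)(γ) = ∑_{i=0}^{s+1} (-1)^i r_i(d) ∑_{j=0}^{ψ i} (-1)^j γ_{j,-d_i}`. -/
noncomputable def Lform (s : ℤ) (d : ℤ → ℤ) (ψ : ℤ → ℤ) (γ : ℤ → ℤ → ℝ) : ℝ :=
  ∑ i ∈ Finset.Icc (0 : ℤ) (s + 1),
    (-1 : ℝ) ^ i.toNat * HK s d i *
      ∑ j ∈ Finset.Icc (0 : ℤ) (ψ i), (-1 : ℝ) ^ j.toNat * γ j (-(d i))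

/-- The bound sequence `φ^j(s) = (0, …, j-2, j-1, j-1, j-1, j, …, s-1)`:
`φ j i = i` if `i < j`, `i - 1` if `i = j`, and `i - 2` if `i > j`. -/
def phiES (j : ℤ) : ℤ → ℤ := fun i => if i < j then i else if i = j then i - 1 else i - 2

/-- The Boij–Söderberg pairing `⟨β^d, γ⟩_{c,τ}` of the pure Betti table
`β^d_{i,k} = r_i(d)` for `k = d_i`, `0 ≤ i ≤ s+1` (and `0` otherwise) against a
table `γ`:  the first sum runs over `j ≤ i` with (`j < τ` or `j ≤ i-2`), the
second over `j = τ`, `i = τ + ε`, `ε ∈ {0,1}`, `k ≤ c + ε`. -/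
noncomputable def pairingES (s : ℤ) (d : ℤ → ℤ) (γ : ℤ → ℤ → ℝ) (c τ : ℤ) : ℝ :=
  (∑ i ∈ Finset.Icc (0 : ℤ) (s + 1),
      ∑ j ∈ (Finset.Icc (0 : ℤ) i).filter (fun j => j < τ ∨ j ≤ i - 2),
        (-1 : ℝ) ^ (i - j).toNat * HK s d i * γ j (-(d i)))
    + ∑ ε ∈ Finset.Icc (0 : ℤ) 1,
        (if τ + ε ≤ s + 1 ∧ d (τ + ε) ≤ c + ε then
            (-1 : ℝ) ^ ε.toNat * HK s d (τ + ε) * γ τ (-(d (τ + ε)))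
          else 0)

lemma filter_eq_phiES (τ i : ℤ) :
    (Finset.Icc (0 : ℤ) i).filter (fun j => j < τ ∨ j ≤ i - 2)
      = Finset.Icc (0 : ℤ) (phiES τ i) := by
  ext j
  simp only [Finset.mem_filter, Finset.mem_Icc, phiES]
  split_ifs <;> omega

lemma neg_one_pow_toNat_sub {i j : ℤ} (h0 : 0 ≤ j) (h : j ≤ i) :
    ((-1 : ℝ)) ^ (i - j).toNat = (-1) ^ i.toNat * (-1) ^ j.toNat := by
  have h1 : (i - j).toNat + (j.toNat + j.toNat) = i.toNat + j.toNat := by omega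
  have h2 : (-1 : ℝ) ^ (j.toNat + j.toNat) = 1 := by
    rw [← two_mul, pow_mul, neg_one_sq, one_pow]
  have h3 : (-1 : ℝ) ^ i.toNat * (-1) ^ j.toNat = (-1) ^ (i.toNat + j.toNat) :=
    (pow_add _ _ _).symm
  rw [h3, ← h1, pow_add, h2, mul_one]

lemma Icc_zero_eq_insert (τ : ℤ) (hτ : 0 ≤ τ) :
    Finset.Icc (0 : ℤ) τ = insert τ (Finset.Icc (0 : ℤ) (τ - 1)) := by
  ext j
  simp only [Finset.mem_insert, Finset.mem_Icc]
  omega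

lemma first_part_eq (s : ℤ) (d : ℤ → ℤ) (γ : ℤ → ℤ → ℝ) (τ : ℤ) :
    (∑ i ∈ Finset.Icc (0 : ℤ) (s + 1),
        ∑ j ∈ (Finset.Icc (0 : ℤ) i).filter (fun j => j < τ ∨ j ≤ i - 2),
          (-1 : ℝ) ^ (i - j).toNat * HK s d i * γ j (-(d i)))
      = Lform s d (phiES τ) γ := by
  unfold Lform
  refine Finset.sum_congr rfl fun i _ => ?_
  rw [filter_eq_phiES, Finset.mul_sum]
  refine Finset.sum_congr rfl fun j hj => ?_
  simp only [Finset.mem_Icc] at hj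
  have hji : j ≤ i := by
    have : phiES τ i ≤ i := by simp only [phiES]; split_ifs <;> omega
    omega
  rw [neg_one_pow_toNat_sub hj.1 hji]
  ring

/-- Identification of the Boij–Söderberg pairing against a pure Betti table with the
linear functionals `L(d, φ^τ)` resp. `L(d, φ^{τ+1})`: if `τ ≥ 1` and `c < d τ` then
`⟨β^d, γ⟩_{c,τ} = L(d, φ^τ)(γ)`, and if `c ≥ d (τ+1)` then
`⟨β^d, γ⟩_{c,τ} = L(d, φ^{τ+1})(γ)`. -/
theorem stmt_18 (s : ℤ) (hs : 0 ≤ s) (d : ℤ → ℤ)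
    (hd : StrictMonoOn d (Set.Icc (0 : ℤ) (s + 1)))
    (γ : ℤ → ℤ → ℝ) (hγ : ∀ j t : ℤ, j < 0 → γ j t = 0)
    (τ c : ℤ) (hτ0 : 0 ≤ τ) (hτs : τ ≤ s) :
    (1 ≤ τ → c < d τ → pairingES s d γ c τ = Lform s d (phiES τ) γ) ∧
      (d (τ + 1) ≤ c → pairingES s d γ c τ = Lform s d (phiES (τ + 1)) γ) := by
  have hIcc01 : (Finset.Icc (0 : ℤ) 1) = {0, 1} := by decide
  have hmemτ : τ ∈ Set.Icc (0 : ℤ) (s + 1) := by constructor <;> omega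
  have hmemτ1 : τ + 1 ∈ Set.Icc (0 : ℤ) (s + 1) := by constructor <;> omega
  have hmono : d τ < d (τ + 1) := hd hmemτ hmemτ1 (by omega)
  unfold pairingES
  rw [first_part_eq]
  constructor
  · intro hτ1 hc
    have h0 : ¬ (τ + 0 ≤ s + 1 ∧ d (τ + 0) ≤ c + 0) := by
      simp only [add_zero]; intro h; omega
    have h1 : ¬ (τ + 1 ≤ s + 1 ∧ d (τ + 1) ≤ c + 1) := by
      intro h; omega
    rw [hIcc01, Finset.sum_pair (by norm_num : (0 : ℤ) ≠ 1), if_neg h0, if_neg h1]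
    ring
  · intro hc
    have h0 : (τ + 0 ≤ s + 1 ∧ d (τ + 0) ≤ c + 0) := by
      simp only [add_zero]; constructor <;> omega
    have h1 : (τ + 1 ≤ s + 1 ∧ d (τ + 1) ≤ c + 1) := by constructor <;> omega
    rw [hIcc01, Finset.sum_pair (by norm_num : (0 : ℤ) ≠ 1), if_pos h0, if_pos h1]
    -- Now relate Lform (phiES τ) and Lform (phiES (τ+1))
    unfold Lform
    have key : ∑ i ∈ Finset.Icc (0 : ℤ) (s + 1),
        ((-1 : ℝ) ^ i.toNat * HK s d i *
            ∑ j ∈ Finset.Icc (0 : ℤ) (phiES (τ + 1) i), (-1 : ℝ) ^ j.toNat * γ j (-(d i))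
          - (-1 : ℝ) ^ i.toNat * HK s d i *
            ∑ j ∈ Finset.Icc (0 : ℤ) (phiES τ i), (-1 : ℝ) ^ j.toNat * γ j (-(d i)))
        = HK s d τ * γ τ (-(d τ)) - HK s d (τ + 1) * γ τ (-(d (τ + 1))) := by
      have hτmem : τ ∈ Finset.Icc (0 : ℤ) (s + 1) := by simp only [Finset.mem_Icc]; omega
      have hτ1mem : τ + 1 ∈ Finset.Icc (0 : ℤ) (s + 1) := by
        simp only [Finset.mem_Icc]; omega
      have hne : τ ≠ τ + 1 := by omega
      rw [Finset.sum_eq_add_of_mem τ (τ + 1) hτmem hτ1mem hne ?_]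
      · have hphi1 : phiES (τ + 1) τ = τ := by simp only [phiES]; split_ifs <;> omega
        have hphi2 : phiES τ τ = τ - 1 := by simp only [phiES]; split_ifs <;> omega
        have hphi3 : phiES (τ + 1) (τ + 1) = τ := by
          simp only [phiES]; split_ifs <;> omega
        have hphi4 : phiES τ (τ + 1) = τ - 1 := by
          simp only [phiES]; split_ifs <;> omega
        have hnot : τ ∉ Finset.Icc (0 : ℤ) (τ - 1) := by
          simp only [Finset.mem_Icc]; omega
        rw [hphi1, hphi2, hphi3, hphi4, Icc_zero_eq_insert τ hτ0,
          Finset.sum_insert hnot, Finset.sum_insert hnot]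
        have hsq : (-1 : ℝ) ^ τ.toNat * (-1 : ℝ) ^ τ.toNat = 1 := by
          rw [← pow_add, ← two_mul, pow_mul, neg_one_sq, one_pow]
        have hsucc : (τ + 1).toNat = τ.toNat + 1 := by omega
        rw [hsucc, pow_succ]
        linear_combination
          (HK s d τ * γ τ (-(d τ)) - HK s d (τ + 1) * γ τ (-(d (τ + 1)))) * hsq
      · intro k hk hk12
        have : phiES (τ + 1) k = phiES τ k := by
          simp only [phiES]; split_ifs <;> omega
        rw [this, sub_self]
    rw [Finset.sum_sub_distrib] at key
    simp only [add_zero, Int.toNat_zero, Int.toNat_one, pow_zero, pow_one] at *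
    linarith [key]
end
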